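/- Let Γ act on a compact Hausdorff space X and suppose the action is (topologically) amenable, i.e., there is a net of continuous maps μ_i : X → Prob(Γ) with sup_{x∈X} ‖ g·μ_i(x) − μ_i(g x) ‖_1 → 0 for all g ∈ Γ. Then for every x ∈ X, the stabilizer subgroup Γ_x = { g ∈ Γ : g x = x } is amenable. -/
import Mathlib


/-- The action of `Γ` on `X` is topologically amenable: approximately invariant continuous
maps `X → Prob(Γ)`, uniformly over `X`. -/
def AmenableAction (Γ : Type*) [Group Γ] (X : Type*) [TopologicalSpace X]
    [MulAction Γ X] : Prop :=
  ∀ ε > (0 : ℝ), ∀ E : Finset Γ,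
    ∃ μ : X → Γ → ℝ,
      (∀ x g, 0 ≤ μ x g) ∧ (∀ x, ∑' g : Γ, μ x g = 1) ∧
      (∀ g : Γ, Continuous fun x => μ x g) ∧
      ∀ g ∈ E, ∀ x : X, ∑' h : Γ, |μ x (g⁻¹ * h) - μ (g • x) h| < ε

/-- `H` is amenable: `ℓ^∞(H)` admits a left-invariant mean. -/
def AmenableGroup (H : Type*) [Group H] : Prop :=
  ∃ m : lp (fun _ : H => ℝ) ⊤ →ₗ[ℝ] ℝ,
    m 1 = 1 ∧ (∀ f : lp (fun _ : H => ℝ) ⊤, (∀ k, 0 ≤ f k) → 0 ≤ m f) ∧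
    ∀ (h : H) (f f' : lp (fun _ : H => ℝ) ⊤),
      (∀ k, f' k = f (h⁻¹ * k)) → m f' = m f

section Aux

/-- Helper: summability and a bound for `∑ ν g * φ g` with `ν` an `ℓ¹` nonnegative
function and `φ` bounded. -/
lemma aux_sum_helper {Γ : Type*} (ν : Γ → ℝ) (hν0 : ∀ g, 0 ≤ ν g) (hνs : Summable ν)
    (φ : Γ → ℝ) (C : ℝ) (hφ : ∀ g, |φ g| ≤ C) :
    Summable (fun g => ν g * φ g) ∧ |∑' g, ν g * φ g| ≤ C * ∑' g, ν g := by
  have habs : ∀ g, |ν g * φ g| ≤ ν g * C := by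
    intro g
    rw [abs_mul, abs_of_nonneg (hν0 g)]
    exact mul_le_mul_of_nonneg_left (hφ g) (hν0 g)
  have hsum_abs : Summable (fun g => |ν g * φ g|) :=
    Summable.of_nonneg_of_le (fun g => abs_nonneg _) habs (hνs.mul_right C)
  have hsum : Summable (fun g => ν g * φ g) := hsum_abs.of_abs
  refine ⟨hsum, ?_⟩
  have h1 : |∑' g, ν g * φ g| ≤ ∑' g, |ν g * φ g| := by
    have := norm_tsum_le_tsum_norm (f := fun g => ν g * φ g)
      (by simp only [Real.norm_eq_abs]; exact hsum_abs)
    simp only [Real.norm_eq_abs] at this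
    exact this
  have h2 : ∑' g, |ν g * φ g| ≤ ∑' g, ν g * C :=
    Summable.tsum_le_tsum habs hsum_abs (hνs.mul_right C)
  have h3 : ∑' g, ν g * C = C * ∑' g, ν g := by
    rw [tsum_mul_right, mul_comm]
  linarith

/-- Key abstract lemma: if `H` maps into `Γ` and there is an `H`-equivariant retraction
`π : Γ → H`, and `Γ` carries approximately `H`-invariant probability densities, then `H`
is amenable. -/
lemma amenable_of_approx {Γ H : Type*} [Group Γ] [Group H] (ι : H →* Γ) (π : Γ → H)
    (hπ : ∀ (h : H) (g : Γ), π (ι h * g) = h * π g)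
    (hr : ∀ ε > (0 : ℝ), ∀ E : Finset H, ∃ ν : Γ → ℝ,
      (∀ g, 0 ≤ ν g) ∧ (∑' g, ν g = 1) ∧
      ∀ h ∈ E, ∑' k : Γ, |ν (ι h * k) - ν k| < ε) :
    AmenableGroup H := by
  classical
  -- index set and filter
  set I := ℝ × Finset H with hI
  set F : Filter I := (nhdsWithin (0:ℝ) (Set.Ioi 0)) ×ˢ (Filter.atTop : Filter (Finset H))
    with hF
  haveI : Filter.NeBot F := by
    apply Filter.prod_neBot.mpr
    constructor
    · exact nhdsGT_neBot 0
    · exact Filter.atTop_neBot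
  set U : Ultrafilter I := Ultrafilter.of F with hU
  have hUF : (U : Filter I) ≤ F := Ultrafilter.of_le F
  -- the approximately invariant densities
  set ν : I → Γ → ℝ := fun i =>
    if hi : 0 < i.1 then (hr i.1 hi i.2).choose else fun g => if g = 1 then 1 else 0
    with hν
  have hpos : ∀ᶠ i in (U : Filter I), 0 < i.1 := by
    apply hUF
    exact Filter.tendsto_fst.eventually eventually_mem_nhdsWithin
  have hP : ∀ᶠ i in (U : Filter I),
      (∀ g, 0 ≤ ν i g) ∧ (∑' g, ν i g = 1) ∧
      ∀ h ∈ i.2, ∑' k : Γ, |ν i (ι h * k) - ν i k| < i.1 := by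
    filter_upwards [hpos] with i hi
    simp only [hν, dif_pos hi]
    exact (hr i.1 hi i.2).choose_spec
  have hSummable : ∀ᶠ i in (U : Filter I), Summable (ν i) := by
    filter_upwards [hP] with i hi
    by_contra hns
    have := tsum_eq_zero_of_not_summable hns
    rw [hi.2.1] at this
    norm_num at this
  -- eventual membership of any h in the Finset component
  have hmem : ∀ h : H, ∀ᶠ i in (U : Filter I), h ∈ i.2 := by
    intro h
    apply hUF
    have : ∀ᶠ E in (Filter.atTop : Filter (Finset H)), {h} ≤ E :=
      Filter.eventually_ge_atTop {h}
    exact Filter.tendsto_snd.eventually (this.mono fun E hE => hE (Finset.mem_singleton_self h))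
  have htend0 : Filter.Tendsto (fun i : I => i.1) (U : Filter I) (nhds 0) :=
    (Filter.tendsto_fst.mono_left hUF).mono_right nhdsWithin_le_nhds
  -- the functionals
  set S : I → (lp (fun _ : H => ℝ) ⊤) → ℝ := fun i f => ∑' g : Γ, ν i g * f (π g) with hS
  have hfb : ∀ (f : lp (fun _ : H => ℝ) ⊤) (k : H), |f k| ≤ ‖f‖ := by
    intro f k
    have := lp.norm_apply_le_norm ENNReal.top_ne_zero f k
    simp only [Real.norm_eq_abs] at this
    exact this
  have hbound : ∀ f : lp (fun _ : H => ℝ) ⊤, ∀ᶠ i in (U : Filter I), |S i f| ≤ ‖f‖ := by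
    intro f
    filter_upwards [hP, hSummable] with i hi hsum
    have := (aux_sum_helper (ν i) hi.1 hsum (fun g => f (π g)) ‖f‖ (fun g => hfb f _)).2
    rw [hi.2.1, mul_one] at this
    exact this
  have hSsummable : ∀ (f : lp (fun _ : H => ℝ) ⊤), ∀ᶠ i in (U : Filter I),
      Summable (fun g => ν i g * f (π g)) := by
    intro f
    filter_upwards [hP, hSummable] with i hi hsum
    exact (aux_sum_helper (ν i) hi.1 hsum (fun g => f (π g)) ‖f‖ (fun g => hfb f _)).1
  -- existence of ultrafilter limits
  have hlim : ∀ f : lp (fun _ : H => ℝ) ⊤,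
      ∃ a : ℝ, Filter.Tendsto (fun i => S i f) (U : Filter I) (nhds a) := by
    intro f
    have hK : Set.Icc (-‖f‖) ‖f‖ ∈ (U.map (fun i => S i f) : Filter ℝ) := by
      rw [Ultrafilter.mem_coe, Ultrafilter.mem_map]
      exact (hbound f).mono fun i hi => abs_le.mp hi
    obtain ⟨a, -, ha⟩ := isCompact_Icc.ultrafilter_le_nhds (U.map fun i => S i f)
      (Filter.le_principal_iff.mpr hK)
    exact ⟨a, ha⟩
  set L : (lp (fun _ : H => ℝ) ⊤) → ℝ := fun f => (hlim f).choose with hL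
  have hLt : ∀ f, Filter.Tendsto (fun i => S i f) (U : Filter I) (nhds (L f)) :=
    fun f => (hlim f).choose_spec
  -- linearity (eventual pointwise identities + uniqueness of limits)
  have hadd : ∀ f g : lp (fun _ : H => ℝ) ⊤, L (f + g) = L f + L g := by
    intro f g
    have hev : ∀ᶠ i in (U : Filter I), S i (f + g) = S i f + S i g := by
      filter_upwards [hSsummable f, hSsummable g] with i hf hg
      have : ∀ t : Γ, ν i t * (f + g) (π t) = ν i t * f (π t) + ν i t * g (π t) := by
        intro t
        rw [lp.coeFn_add]
        simp [mul_add]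
      simp only [hS, this]
      exact Summable.tsum_add hf hg
    have h1 : Filter.Tendsto (fun i => S i (f + g)) (U : Filter I) (nhds (L f + L g)) :=
      Filter.Tendsto.congr' (hev.mono fun i hi => hi.symm) ((hLt f).add (hLt g))
    exact tendsto_nhds_unique (hLt (f + g)) h1
  have hsmul : ∀ (r : ℝ) (f : lp (fun _ : H => ℝ) ⊤), L (r • f) = r * L f := by
    intro r f
    have hev : ∀ᶠ i in (U : Filter I), S i (r • f) = r * S i f := by
      filter_upwards with i
      have : ∀ t : Γ, ν i t * (r • f) (π t) = r * (ν i t * f (π t)) := by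
        intro t
        rw [lp.coeFn_smul]
        simp [smul_eq_mul]; ring
      simp only [hS, this]
      exact tsum_mul_left
    have h1 : Filter.Tendsto (fun i => S i (r • f)) (U : Filter I) (nhds (r * L f)) :=
      Filter.Tendsto.congr' (hev.mono fun i hi => hi.symm) ((hLt f).const_mul r)
    exact tendsto_nhds_unique (hLt (r • f)) h1
  refine ⟨{ toFun := L, map_add' := hadd, map_smul' := hsmul }, ?_, ?_, ?_⟩
  · -- m 1 = 1
    have hev : ∀ᶠ i in (U : Filter I), S i (1 : lp (fun _ : H => ℝ) ⊤) = 1 := by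
      filter_upwards [hP] with i hi
      have : ∀ t : Γ, ν i t * (1 : lp (fun _ : H => ℝ) ⊤) (π t) = ν i t := by
        intro t
        rw [lp.infty_coeFn_one]
        simp
      simp only [hS, this]
      exact hi.2.1
    have h1 : Filter.Tendsto (fun i => S i (1 : lp (fun _ : H => ℝ) ⊤)) (U : Filter I)
        (nhds 1) := Filter.Tendsto.congr' (hev.mono fun i hi => hi.symm) tendsto_const_nhds
    exact tendsto_nhds_unique (hLt 1) h1
  · -- positivity
    intro f hf
    have hev : ∀ᶠ i in (U : Filter I), 0 ≤ S i f := by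
      filter_upwards [hP] with i hi
      exact tsum_nonneg fun t => mul_nonneg (hi.1 t) (hf (π t))
    exact ge_of_tendsto (hLt f) hev
  · -- left invariance
    intro h f f' hf'
    have a := ι h⁻¹
    -- S i f' = ∑ ν i (ι h * s) * f (π s)
    have hev : ∀ᶠ i in (U : Filter I), |S i f' - S i f| ≤ i.1 * ‖f‖ := by
      filter_upwards [hP, hSummable, hSsummable f, hmem h] with i hi hsum hsf hhm
      -- rewrite S i f'
      have e1 : S i f' = ∑' t : Γ, ν i t * f (π (ι h⁻¹ * t)) := by
        simp only [hS]
        congr 1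
        ext t
        rw [hf' (π t), ← hπ h⁻¹ t]
      have e2 : ∑' t : Γ, ν i t * f (π (ι h⁻¹ * t))
          = ∑' s : Γ, ν i (ι h * s) * f (π s) := by
        rw [← (Equiv.mulLeft (ι h)).tsum_eq (fun t => ν i t * f (π (ι h⁻¹ * t)))]
        congr 1
        ext s
        simp [Equiv.mulLeft, map_inv]
      -- summability of shifted sum
      have hsum' : Summable (fun s => ν i (ι h * s)) :=
        (Equiv.mulLeft (ι h)).summable_iff.mpr hsum
      have hs1 : Summable (fun s : Γ => ν i (ι h * s) * f (π s)) :=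
        (aux_sum_helper (fun s => ν i (ι h * s)) (fun s => hi.1 _) hsum'
          (fun s => f (π s)) ‖f‖ (fun s => hfb f _)).1
      have e3 : S i f' - S i f = ∑' s : Γ, (ν i (ι h * s) - ν i s) * f (π s) := by
        rw [e1, e2]
        rw [← Summable.tsum_sub hs1 hsf]
        congr 1
        ext s
        ring
      -- bound
      have habs : Summable (fun s : Γ => |ν i (ι h * s) - ν i s|) := by
        apply Summable.of_nonneg_of_le (fun s => abs_nonneg _)
          (fun s => (abs_sub _ _).trans ?_) (hsum'.add hsum)
        rw [abs_of_nonneg (hi.1 _), abs_of_nonneg (hi.1 _)]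
      have hb1 : |∑' s : Γ, (ν i (ι h * s) - ν i s) * f (π s)|
          ≤ ∑' s : Γ, |ν i (ι h * s) - ν i s| * ‖f‖ := by
        have hsa : Summable (fun s : Γ => |(ν i (ι h * s) - ν i s) * f (π s)|) := by
          apply Summable.of_nonneg_of_le (fun s => abs_nonneg _) _ (habs.mul_right ‖f‖)
          intro s
          rw [abs_mul]
          exact mul_le_mul_of_nonneg_left ((hfb f _)) (abs_nonneg _)
        calc |∑' s : Γ, (ν i (ι h * s) - ν i s) * f (π s)|
            ≤ ∑' s : Γ, |(ν i (ι h * s) - ν i s) * f (π s)| := by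
              have := norm_tsum_le_tsum_norm (f := fun s : Γ => (ν i (ι h * s) - ν i s) * f (π s))
                (by simp only [Real.norm_eq_abs]; exact hsa)
              simp only [Real.norm_eq_abs] at this
              exact this
          _ ≤ ∑' s : Γ, |ν i (ι h * s) - ν i s| * ‖f‖ := by
              apply Summable.tsum_le_tsum _ hsa (habs.mul_right ‖f‖)
              intro s
              rw [abs_mul]
              exact mul_le_mul_of_nonneg_left ((hfb f _)) (abs_nonneg _)
      have hb2 : ∑' s : Γ, |ν i (ι h * s) - ν i s| * ‖f‖
          ≤ i.1 * ‖f‖ := by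
        rw [tsum_mul_right]
        apply mul_le_mul_of_nonneg_right _ (norm_nonneg f)
        exact le_of_lt (hi.2.2 h hhm)
      rw [e3]
      exact hb1.trans hb2
    have h0 : Filter.Tendsto (fun i => S i f' - S i f) (U : Filter I) (nhds 0) := by
      have hg : Filter.Tendsto (fun i : I => i.1 * ‖f‖) (U : Filter I) (nhds 0) := by
        have := htend0.mul_const ‖f‖
        rwa [zero_mul] at this
      apply squeeze_zero_norm' _ hg
      filter_upwards [hev] with i hi
      simp only [Real.norm_eq_abs]
      exact hi
    have h1 : Filter.Tendsto (fun i => S i f' - S i f) (U : Filter I)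
        (nhds (L f' - L f)) := (hLt f').sub (hLt f)
    have h2 := tendsto_nhds_unique h1 h0
    show L f' = L f
    linarith

end Aux

/-- if `Γ` acts amenably on a compact Hausdorff space `X`, then every point
stabilizer `Γ_x` is an amenable group. -/
theorem stmt9 {Γ : Type*} [Group Γ] (X : Type*) [TopologicalSpace X] [CompactSpace X]
    [T2Space X] [MulAction Γ X] (hcont : ∀ g : Γ, Continuous fun x : X => g • x)
    (ha : AmenableAction Γ X) (x : X) :
    AmenableGroup ↥(MulAction.stabilizer Γ x) := by
  classical
  set H := MulAction.stabilizer Γ x with hHdef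
  -- a section of the orbit map
  let c : X → Γ := fun y => if h : ∃ g : Γ, g • x = y then h.choose else 1
  have hc : ∀ g : Γ, c (g • x) • x = g • x := by
    intro g
    have h : ∃ g' : Γ, g' • x = g • x := ⟨g, rfl⟩
    simp only [c, dif_pos h]
    exact h.choose_spec
  -- equivariant retraction π : Γ → H
  have hπmem : ∀ g : Γ, (g * c (g⁻¹ • x)) ∈ H := by
    intro g
    rw [MulAction.mem_stabilizer_iff, mul_smul, hc g⁻¹, smul_inv_smul]
  let π : Γ → H := fun g => ⟨g * c (g⁻¹ • x), hπmem g⟩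
  have hπ : ∀ (h : H) (g : Γ), π ((H.subtype h) * g) = h * π g := by
    intro h g
    apply Subtype.ext
    show ((h : Γ) * g) * c (((h : Γ) * g)⁻¹ • x) = (h : Γ) * (g * c (g⁻¹ • x))
    have hx : ((h : Γ) * g)⁻¹ • x = g⁻¹ • x := by
      rw [mul_inv_rev, mul_smul]
      congr 1
      have hh : (h : Γ) • x = x := h.2
      rw [inv_smul_eq_iff, hh]
    rw [hx, mul_assoc]
  -- approximately invariant densities from the amenable action
  apply amenable_of_approx H.subtype π hπ
  intro ε hε E
  obtain ⟨μ, hμ0, hμ1, -, hμinv⟩ := ha ε hε (E.image (fun t => (H.subtype t)⁻¹))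
  refine ⟨μ x, fun g => hμ0 x g, hμ1 x, ?_⟩
  intro h hh
  have hmem : (H.subtype h)⁻¹ ∈ E.image (fun t => (H.subtype t)⁻¹) :=
    Finset.mem_image.mpr ⟨h, hh, rfl⟩
  have := hμinv (H.subtype h)⁻¹ hmem x
  have hx : (H.subtype h)⁻¹ • x = x := by
    have hh2 : (h : Γ) • x = x := h.2
    rw [inv_smul_eq_iff]
    exact hh2.symm
  rw [hx, inv_inv] at this
  exact this
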